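/- Every ranked coalgebra is well-founded: the F-coalgebra induced by a ranked family has no proper cartesian subcoalgebras. -/
import Mathlib


open CategoryTheory CategoryTheory.Limits

universe v u

/-- Every ranked coalgebra is well-founded: the `F`-coalgebra on
`∐_i C_i` induced by a ranked family `(c_i : C_i ⟶ F(∐_{j<i} C_j))` has no
proper cartesian subcoalgebra: any mono `m : (S,s) ↣ (∐ C, c)` of coalgebras
whose square is a pullback is an isomorphism. -/
theorem stmt_8 {C : Type u} [Category.{v} C] [HasCoproducts.{0} C]
    {I : Type} (r : I → I → Prop) (hwf : WellFounded r)
    (F : C ⥤ C) (Cf : I → C)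
    (cf : ∀ i : I, Cf i ⟶ F.obj (∐ fun j : {j : I // r j i} => Cf j.1))
    (S : C)
    (s : S ⟶ F.obj S) (m : S ⟶ ∐ Cf) [Mono m]
    (hpb : IsPullback m s
      (Sigma.desc fun i =>
        cf i ≫ F.map (Sigma.desc fun j : {j : I // r j i} => Sigma.ι Cf j.1))
      (F.map m)) :
    IsIso m := by
  have key : ∀ i : I, ∃ l : Cf i ⟶ S, l ≫ m = Sigma.ι Cf i := by
    intro i
    induction i using hwf.induction with
    | _ i ih =>
      choose l hl using ih
      let k : (∐ fun j : {j : I // r j i} => Cf j.1) ⟶ S :=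
        Sigma.desc fun j => l j.1 j.2
      have hk : k ≫ m = Sigma.desc fun j : {j : I // r j i} => Sigma.ι Cf j.1 := by
        ext j; simp [k, hl]
      have hcomm : Sigma.ι Cf i ≫ (Sigma.desc fun i =>
          cf i ≫ F.map (Sigma.desc fun j : {j : I // r j i} => Sigma.ι Cf j.1)) =
          (cf i ≫ F.map k) ≫ F.map m := by
        rw [Sigma.ι_desc, Category.assoc, ← F.map_comp, hk]
      exact ⟨hpb.lift (Sigma.ι Cf i) (cf i ≫ F.map k) hcomm, hpb.lift_fst _ _ _⟩
  choose l hl using key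
  have h1 : Sigma.desc l ≫ m = 𝟙 (∐ Cf) := by
    ext i; simp [hl]
  have h2 : m ≫ Sigma.desc l = 𝟙 S := by
    rw [← cancel_mono m, Category.assoc, h1, Category.comp_id, Category.id_comp]
  exact ⟨Sigma.desc l, h2, h1⟩
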